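/- If a finite metric space (X,d) admits a (τ,ρ,k,δ)-ultrametric cover with k ≥ 2ρ, then every closed ball in X of radius r > 0 can be covered by at most τ·δ closed balls of radius r/2; in particular (X,d) has doubling dimension at most log₂(τ·δ). -/
import Mathlib


open scoped BigOperators

open scoped BigOperators

/-- `du` is an ultrametric distance function on `X`: a metric satisfying the
strong triangle inequality. -/
def UltrametricOn {X : Type*} (du : X → X → ℝ) : Prop :=
  (∀ x, du x x = 0) ∧ (∀ x y : X, x ≠ y → 0 < du x y) ∧
    (∀ x y : X, du x y = du y x) ∧
    ∀ x y z : X, du x z ≤ max (du x y) (du y z)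

/-- The ultrametric `du` is a `k`-HST: distinct positive distance values are
separated by a factor of `k`. -/
def IsHST {X : Type*} (du : X → X → ℝ) (k : ℝ) : Prop :=
  ∀ x y z : X, 0 < du x y → du x y < du x z → k * du x y ≤ du x z

/-- The tree of the ultrametric `du` has degree at most `δ`: for every `x` and
`r > 0`, the closed ball `{y : du x y ≤ r}` meets at most `δ` equivalence
classes of the relation `du (·,·) < r`. -/
def HSTDegreeLE {X : Type*} (du : X → X → ℝ) (δ : ℝ) : Prop :=
  ∀ (x : X) (r : ℝ), 0 < r → ∃ S : Finset X, (S.card : ℝ) ≤ δ ∧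
    ∀ y : X, du x y ≤ r → ∃ z ∈ S, du y z < r

/-- `(τ, ρ, k, δ)`-ultrametric cover: a `(τ,ρ)`-ultrametric cover in which every
ultrametric is a `k`-HST whose tree has degree at most `δ`. -/
def IsHSTUltrametricCover (X : Type*) [MetricSpace X] (τ ρ k δ : ℝ) : Prop :=
  ∃ s : ℕ, (s : ℝ) ≤ τ ∧ ∃ D : Fin s → X → X → ℝ,
    (∀ i, UltrametricOn (D i)) ∧
    (∀ (i : Fin s) (x y : X), dist x y ≤ D i x y) ∧
    (∀ x y : X, ∃ i, D i x y ≤ ρ * dist x y) ∧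
    (∀ i, IsHST (D i) k) ∧
    ∀ i, HSTDegreeLE (D i) δ

/-- `X` has doubling dimension at most `d`: every ball of radius `2r` can be
covered by at most `2^d` balls of radius `r`. -/
def DoublingDimLE (X : Type*) [MetricSpace X] (d : ℝ) : Prop :=
  ∀ (x : X) (r : ℝ), 0 < r → ∃ S : Finset X, (S.card : ℝ) ≤ (2 : ℝ) ^ d ∧
    ∀ y : X, dist x y ≤ 2 * r → ∃ z ∈ S, dist y z ≤ r

/-- If a finite metric space admits a `(τ,ρ,k,δ)`-ultrametric cover with
`k ≥ 2ρ`, then every closed ball of radius `r > 0` can be covered by at most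
`τ·δ` closed balls of radius `r/2`; in particular the doubling dimension is at
most `log₂(τ·δ)`. -/
theorem hst_cover_implies_doubling
    (X : Type) [MetricSpace X] [Fintype X] (τ ρ k δ : ℝ)
    (hk : 2 * ρ ≤ k)
    (hcover : IsHSTUltrametricCover X τ ρ k δ) :
    (∀ (x : X) (r : ℝ), 0 < r → ∃ S : Finset X, (S.card : ℝ) ≤ τ * δ ∧
        ∀ y : X, dist x y ≤ r → ∃ z ∈ S, dist y z ≤ r / 2) ∧
      DoublingDimLE X (Real.logb 2 (τ * δ)) := by
  classical
  obtain ⟨s, hs, D, hUM, hdom, hcov, hHST, hdeg⟩ := hcover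
  have hzero : ∀ i (x : X), D i x x = 0 := fun i => (hUM i).1
  have hpos : ∀ i (x y : X), x ≠ y → 0 < D i x y := fun i => (hUM i).2.1
  have hsymm : ∀ i (x y : X), D i x y = D i y x := fun i => (hUM i).2.2.1
  have hmax : ∀ i (x y z : X), D i x z ≤ max (D i x y) (D i y z) :=
    fun i => (hUM i).2.2.2
  -- In presence of a point, δ ≥ 1 and τ ≥ 1
  have hδ1 : ∀ _ : X, (1 : ℝ) ≤ δ := by
    intro x
    obtain ⟨i, -⟩ := hcov x x
    obtain ⟨S, hScard, hS⟩ := hdeg i x 1 one_pos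
    obtain ⟨z, hz, -⟩ := hS x (by rw [hzero]; norm_num)
    have h1 : (1 : ℝ) ≤ (S.card : ℝ) := by
      exact_mod_cast Finset.card_pos.mpr ⟨z, hz⟩
    linarith
  have hτ1 : ∀ _ : X, (1 : ℝ) ≤ τ := by
    intro x
    obtain ⟨i, -⟩ := hcov x x
    have h1 : (1 : ℕ) ≤ s := i.pos
    calc (1 : ℝ) ≤ (s : ℝ) := by exact_mod_cast h1
      _ ≤ τ := hs
  have main : ∀ (x : X) (r : ℝ), 0 < r → ∃ S : Finset X, (S.card : ℝ) ≤ τ * δ ∧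
      ∀ y : X, dist x y ≤ r → ∃ z ∈ S, dist y z ≤ r / 2 := by
    intro x r hr
    have hδ1' := hδ1 x
    have key : ∀ i : Fin s, ∃ T : Finset X, (T.card : ℝ) ≤ δ ∧
        ∀ y : X, D i x y ≤ ρ * dist x y → dist x y ≤ r → ∃ z ∈ T, dist y z ≤ r / 2 := by
      intro i
      by_cases hA : ∃ w, 0 < D i x w ∧ D i x w ≤ ρ * r
      · -- there is a point at positive tree-distance ≤ ρr from x
        have hρpos : 0 < ρ := by
          obtain ⟨w, hw1, hw2⟩ := hA
          nlinarith
        have hkpos : 0 < k := by linarith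
        obtain ⟨w₀, hw₀, hw₀max⟩ :=
          (Finset.univ.filter fun w => 0 < D i x w ∧ D i x w ≤ ρ * r).exists_max_image
            (fun w => D i x w)
            (by obtain ⟨w, hw⟩ := hA
                exact ⟨w, by simp [hw.1, hw.2]⟩)
        simp only [Finset.mem_filter, Finset.mem_univ, true_and] at hw₀
        have hmpos : 0 < D i x w₀ := hw₀.1
        have hmle : D i x w₀ ≤ ρ * r := hw₀.2
        obtain ⟨T, hTcard, hT⟩ := hdeg i x (D i x w₀) hmpos
        refine ⟨T, hTcard, ?_⟩
        -- a representative close to x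
        obtain ⟨z₀, hz₀T, hz₀⟩ := hT x (by rw [hzero]; exact hmpos.le)
        have hxz₀ : D i x z₀ ≤ r / 2 := by
          rcases eq_or_ne x z₀ with h | h
          · rw [← h, hzero]; linarith
          · have h1 : 0 < D i x z₀ := hpos i x z₀ h
            have h2 : k * D i x z₀ ≤ D i x w₀ := hHST i x z₀ w₀ h1 hz₀
            nlinarith
        intro y h1 h2
        have hdxy : D i x y ≤ ρ * r := by nlinarith [dist_nonneg (x := x) (y := y)]
        rcases eq_or_ne x y with hxy | hxy
        · subst hxy
          refine ⟨z₀, hz₀T, ?_⟩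
          calc dist x z₀ ≤ D i x z₀ := hdom i x z₀
            _ ≤ r / 2 := hxz₀
        · have hdpos : 0 < D i x y := hpos i x y hxy
          have hyle : D i x y ≤ D i x w₀ := by
            refine hw₀max y ?_
            simp [hdpos, hdxy]
          rcases eq_or_lt_of_le hyle with heq | hlt
          · -- y is at the maximal level from x
            obtain ⟨z, hzT, hz⟩ := hT y heq.le
            refine ⟨z, hzT, ?_⟩
            rcases eq_or_ne y z with h | h
            · rw [h, dist_self]; linarith
            · have hp : 0 < D i y z := hpos i y z h
              have hyx : D i y x = D i x w₀ := by rw [← hsymm i x y, heq]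
              have h3 : k * D i y z ≤ D i y x := by
                refine hHST i y z x hp ?_
                rw [hyx]; exact hz
              rw [hyx] at h3
              calc dist y z ≤ D i y z := hdom i y z
                _ ≤ r / 2 := by nlinarith
          · -- y is strictly below the maximal level: it is close to x
            have hxysmall : D i x y ≤ r / 2 := by
              have h3 := hHST i x y w₀ hdpos hlt
              nlinarith
            refine ⟨z₀, hz₀T, ?_⟩
            have hyx : D i y x ≤ r / 2 := by rw [← hsymm i x y]; exact hxysmall
            calc dist y z₀ ≤ D i y z₀ := hdom i y z₀
              _ ≤ max (D i y x) (D i x z₀) := hmax i y x z₀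
              _ ≤ r / 2 := max_le hyx hxz₀
      · -- degenerate tree: only y = x is served by it
        refine ⟨{x}, by simpa using hδ1', ?_⟩
        intro y h1 h2
        rcases eq_or_ne x y with hxy | hxy
        · subst hxy
          exact ⟨x, Finset.mem_singleton_self x, by rw [dist_self]; linarith⟩
        · exfalso
          have hdist : 0 < dist x y := dist_pos.mpr hxy
          have hd1 : dist x y ≤ D i x y := hdom i x y
          have hρ1 : 1 ≤ ρ := by nlinarith [hpos i x y hxy]
          exact hA ⟨y, hpos i x y hxy, h1.trans (by nlinarith)⟩
    choose T hTcard hTprop using key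
    refine ⟨Finset.univ.biUnion T, ?_, ?_⟩
    · have hb : (Finset.univ.biUnion T).card ≤ ∑ i, (T i).card :=
        Finset.card_biUnion_le
      calc ((Finset.univ.biUnion T).card : ℝ)
          ≤ ((∑ i, (T i).card : ℕ) : ℝ) := by exact_mod_cast hb
        _ = ∑ i, ((T i).card : ℝ) := by push_cast; rfl
        _ ≤ ∑ _i : Fin s, δ := Finset.sum_le_sum fun i _ => hTcard i
        _ = (s : ℝ) * δ := by simp [Finset.sum_const, nsmul_eq_mul]
        _ ≤ τ * δ := by nlinarith [hδ1 x, hs]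
    · intro y hy
      obtain ⟨i, hi⟩ := hcov x y
      obtain ⟨z, hz, hdz⟩ := hTprop i y hi hy
      exact ⟨z, Finset.mem_biUnion.mpr ⟨i, Finset.mem_univ i, hz⟩, hdz⟩
  refine ⟨main, ?_⟩
  intro x r hr
  obtain ⟨S, hc, hS⟩ := main x (2 * r) (by linarith)
  have hτδ : 0 < τ * δ := by nlinarith [hτ1 x, hδ1 x]
  refine ⟨S, ?_, fun y hy => ?_⟩
  · rw [Real.rpow_logb two_pos (by norm_num) hτδ]
    exact hc
  · obtain ⟨z, hz, hdz⟩ := hS y hy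
    exact ⟨z, hz, by linarith⟩
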